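/- Let f : ℝ^d → ℝ be convex and L-smooth (differentiable with L-Lipschitz gradient, L > 0), bounded below with f* := inf f. Let w_0 ∈ ℝ^d and define gradient-descent iterates w_{τ+1} = w_τ − η ∇f(w_τ) with step size 0 < η ≤ 1/(2L). Let E be a positive integer and u := Σ_{τ=0}^{E−1} ∇f(w_τ). Then for every w* ∈ ℝ^d, with Δ := f(w*) − f*, it holds that ‖w_0 − w*‖² − ‖w_E − w*‖² ≥ (η/(2LE)) ‖u‖² − 2 η E Δ. -/

import Mathlib

open scoped RealInnerProductSpace


variable {d : ℕ}

lemma line_deriv (f : EuclideanSpace ℝ (Fin d) → ℝ) (hdiff : Differentiable ℝ f)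
    (x v : EuclideanSpace ℝ (Fin d)) (t : ℝ) :
    HasDerivAt (fun s : ℝ => f (x + s • v)) ⟪gradient f (x + t • v), v⟫ t := by
  have hline : HasDerivAt (fun s : ℝ => x + s • v) v t := by
    simpa using ((hasDerivAt_id t).smul_const v).const_add x
  have hf : HasFDerivAt f (InnerProductSpace.toDual ℝ _ (gradient f (x + t • v))) (x + t • v) :=
    (hdiff _).hasGradientAt.hasFDerivAt
  exact (hf.comp_hasDerivAt t hline).congr_deriv (by simp)

lemma conv_lb (f : EuclideanSpace ℝ (Fin d) → ℝ) (hconv : ConvexOn ℝ Set.univ f)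
    (hdiff : Differentiable ℝ f) (x y : EuclideanSpace ℝ (Fin d)) :
    f x + ⟪gradient f x, y - x⟫ ≤ f y := by
  set v := y - x with hv
  set g : ℝ → ℝ := fun s => f (x + s • v) with hgdef
  have hg : ConvexOn ℝ Set.univ g := by
    have h1 := hconv.comp_affineMap (AffineMap.lineMap x y : ℝ →ᵃ[ℝ] _)
    have : g = f ∘ (AffineMap.lineMap x y : ℝ →ᵃ[ℝ] _) := by
      funext s
      simp [hgdef, AffineMap.lineMap_apply, hv, add_comm]
    rw [this]
    simpa using h1
  have hd : HasDerivAt g ⟪gradient f x, v⟫ 0 := by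
    simpa using line_deriv f hdiff x v 0
  have := hg.le_slope_of_hasDerivAt (Set.mem_univ (0:ℝ)) (Set.mem_univ (1:ℝ)) one_pos hd
  have hs : slope g 0 1 = f y - f x := by
    simp [slope, hgdef, hv]
  rw [hs] at this
  linarith

lemma descent (f : EuclideanSpace ℝ (Fin d) → ℝ) (L : ℝ) (hL : 0 < L)
    (hdiff : Differentiable ℝ f)
    (hlip : ∀ x y, ‖gradient f x - gradient f y‖ ≤ L * ‖x - y‖)
    (x y : EuclideanSpace ℝ (Fin d)) :
    f y ≤ f x + ⟪gradient f x, y - x⟫ + L / 2 * ‖y - x‖ ^ 2 := by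
  set v := y - x with hv
  set g : ℝ → ℝ := fun s => f (x + s • v) with hgdef
  set g' : ℝ → ℝ := fun t => ⟪gradient f (x + t • v), v⟫ with hg'def
  have hd : ∀ t ∈ Set.uIcc (0:ℝ) 1, HasDerivAt g (g' t) t := fun t _ => line_deriv f hdiff x v t
  have hgradcont : Continuous (gradient f) := by
    have : LipschitzWith ⟨L, hL.le⟩ (gradient f) := by
      apply LipschitzWith.of_dist_le_mul
      intro a b
      rw [dist_eq_norm, dist_eq_norm]; exact hlip a b
    exact this.continuous
  have hcont : Continuous g' := by
    apply Continuous.inner (by fun_prop) continuous_const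
  have hint : IntervalIntegrable g' MeasureTheory.volume 0 1 := hcont.intervalIntegrable 0 1
  have hftc : ∫ t in (0:ℝ)..1, g' t = g 1 - g 0 :=
    intervalIntegral.integral_eq_sub_of_hasDerivAt hd hint
  have hbound : ∀ t ∈ Set.Icc (0:ℝ) 1, g' t ≤ ⟪gradient f x, v⟫ + L * ‖v‖ ^ 2 * t := by
    intro t ht
    have h1 : g' t - ⟪gradient f x, v⟫ = ⟪gradient f (x + t • v) - gradient f x, v⟫ := by
      simp [hg'def, inner_sub_left]
    have h2 : ⟪gradient f (x + t • v) - gradient f x, v⟫ ≤ L * (t * ‖v‖) * ‖v‖ := by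
      calc ⟪gradient f (x + t • v) - gradient f x, v⟫
          ≤ ‖gradient f (x + t • v) - gradient f x‖ * ‖v‖ := real_inner_le_norm _ _
        _ ≤ (L * ‖(x + t • v) - x‖) * ‖v‖ :=
            mul_le_mul_of_nonneg_right (hlip _ _) (norm_nonneg _)
        _ = L * (t * ‖v‖) * ‖v‖ := by
            rw [show x + t • v - x = t • v by abel, norm_smul]
            simp [abs_of_nonneg ht.1]
    nlinarith [h1, h2]
  have hmono : ∫ t in (0:ℝ)..1, g' t ≤ ∫ t in (0:ℝ)..1, (⟪gradient f x, v⟫ + L * ‖v‖ ^ 2 * t) := by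
    apply intervalIntegral.integral_mono_on zero_le_one hint
    · exact (Continuous.intervalIntegrable (by continuity) 0 1)
    · exact hbound
  have hrhs : ∫ t in (0:ℝ)..1, (⟪gradient f x, v⟫ + L * ‖v‖ ^ 2 * t) =
      ⟪gradient f x, v⟫ + L * ‖v‖ ^ 2 / 2 := by
    rw [intervalIntegral.integral_add (intervalIntegrable_const)
      ((intervalIntegral.intervalIntegrable_id).const_mul _)]
    rw [intervalIntegral.integral_const_mul, integral_id, intervalIntegral.integral_const]
    simp
    ring
  have hg0 : g 0 = f x := by simp [hgdef]
  have hg1 : g 1 = f y := by simp [hgdef, hv]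
  rw [hftc, hrhs, hg0, hg1] at hmono
  linarith [hmono]

lemma glb_bound (f : EuclideanSpace ℝ (Fin d) → ℝ) (L : ℝ) (hL : 0 < L)
    (hdiff : Differentiable ℝ f)
    (hlip : ∀ x y, ‖gradient f x - gradient f y‖ ≤ L * ‖x - y‖)
    (fstar : ℝ) (hfstar : IsGLB (Set.range f) fstar)
    (x : EuclideanSpace ℝ (Fin d)) :
    fstar + 1 / (2 * L) * ‖gradient f x‖ ^ 2 ≤ f x := by
  set g := gradient f x with hg
  have hd := descent f L hL hdiff hlip x (x - (1 / L) • g)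
  have h1 : x - (1/L) • g - x = -((1/L) • g) := by abel
  rw [h1] at hd
  have h2 : ⟪g, -((1/L) • g)⟫ = -(1/L) * ‖g‖ ^ 2 := by
    rw [inner_neg_right, real_inner_smul_right, real_inner_self_eq_norm_sq]
    ring
  have h3 : ‖-((1/L) • g)‖ ^ 2 = (1/L) ^ 2 * ‖g‖ ^ 2 := by
    rw [norm_neg, norm_smul, Real.norm_eq_abs, abs_of_pos (by positivity : (0:ℝ) < 1/L)]
    ring
  rw [h2, h3] at hd
  have hlb : fstar ≤ f (x - (1/L) • g) := hfstar.1 ⟨_, rfl⟩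
  have hLne : L ≠ 0 := ne_of_gt hL
  have : f (x - (1/L) • g) ≤ f x - 1/(2*L) * ‖g‖^2 := by
    calc f (x - (1/L) • g) ≤ f x + -(1/L) * ‖g‖^2 + L/2 * ((1/L)^2 * ‖g‖^2) := hd
      _ = f x - 1/(2*L) * ‖g‖^2 := by field_simp; ring
  linarith

/-- Equation (jan30-4): distance decrease in terms of the aggregated update
`u = Σ_{τ<E} ∇f(w_τ)`. -/
theorem stmt_1 {d : ℕ} (f : EuclideanSpace ℝ (Fin d) → ℝ) (L : ℝ) (hL : 0 < L)
    (hconv : ConvexOn ℝ Set.univ f)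
    (hdiff : Differentiable ℝ f)
    (hlip : ∀ x y, ‖gradient f x - gradient f y‖ ≤ L * ‖x - y‖)
    (fstar : ℝ) (hfstar : IsGLB (Set.range f) fstar)
    (η : ℝ) (hη0 : 0 < η) (hη : η ≤ 1 / (2 * L))
    (w : ℕ → EuclideanSpace ℝ (Fin d))
    (hw : ∀ τ, w (τ + 1) = w τ - η • gradient f (w τ))
    (E : ℕ) (hE : 0 < E)
    (u : EuclideanSpace ℝ (Fin d))
    (hu : u = ∑ τ ∈ Finset.range E, gradient f (w τ))
    (wstar : EuclideanSpace ℝ (Fin d)) :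
    ‖w 0 - wstar‖ ^ 2 - ‖w E - wstar‖ ^ 2 ≥
      (η / (2 * L * (E : ℝ))) * ‖u‖ ^ 2 - 2 * η * (E : ℝ) * (f wstar - fstar) := by
  set Δ := f wstar - fstar with hΔ
  set g : ℕ → EuclideanSpace ℝ (Fin d) := fun τ => gradient f (w τ) with hgdef
  -- per-step inequality
  have hstep : ∀ τ, ‖w τ - wstar‖ ^ 2 - ‖w (τ+1) - wstar‖ ^ 2 ≥
      η / (2*L) * ‖g τ‖ ^ 2 - 2 * η * Δ := by
    intro τ
    set a := w τ - wstar with ha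
    have hnext : w (τ+1) - wstar = a - η • g τ := by rw [hw τ, ha]; abel
    have hexp : ‖a - η • g τ‖ ^ 2 = ‖a‖^2 - 2 * (η * ⟪a, g τ⟫) + η^2 * ‖g τ‖^2 := by
      rw [norm_sub_sq_real, real_inner_smul_right, norm_smul]
      simp [abs_of_nonneg hη0.le]
      ring
    have hconvineq : f (w τ) + ⟪g τ, wstar - w τ⟫ ≤ f wstar :=
      conv_lb f hconv hdiff (w τ) wstar
    have hcomm : ⟪g τ, wstar - w τ⟫ = -⟪a, g τ⟫ := by
      rw [real_inner_comm, ha, ← inner_neg_left]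
      congr 1; abel
    have hglb := glb_bound f L hL hdiff hlip fstar hfstar (w τ)
    have hinner : ⟪a, g τ⟫ ≥ 1/(2*L) * ‖g τ‖^2 - Δ := by
      rw [hcomm] at hconvineq; rw [hΔ]; linarith
    have hη2 : η^2 ≤ η * (1/(2*L)) := by nlinarith
    have hgn : (0:ℝ) ≤ ‖g τ‖^2 := by positivity
    rw [hnext, hexp]
    have hLinv : η/(2*L) ≤ η/L - η^2 := by
      have heq : η * (1/(2*L)) = η/(2*L) := by ring
      have h4 : η/(2*L) + η/(2*L) = η/L := by field_simp; ring
      linarith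
    have key := mul_le_mul_of_nonneg_left hinner (by linarith : (0:ℝ) ≤ 2*η)
    have h6 := mul_le_mul_of_nonneg_right hη2 hgn
    rw [ge_iff_le]
    have heq : η/(2*L) * ‖g τ‖^2 = η*(1/(2*L))*‖g τ‖^2 := by ring
    rw [heq]
    linarith [key, h6]
  -- telescoping
  have htel : ‖w 0 - wstar‖ ^ 2 - ‖w E - wstar‖ ^ 2 =
      ∑ τ ∈ Finset.range E, (‖w τ - wstar‖ ^ 2 - ‖w (τ+1) - wstar‖ ^ 2) :=
    (Finset.sum_range_sub' (fun τ => ‖w τ - wstar‖ ^ 2) E).symm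
  set S := ∑ τ ∈ Finset.range E, ‖g τ‖ ^ 2 with hS
  have hsum : ‖w 0 - wstar‖ ^ 2 - ‖w E - wstar‖ ^ 2 ≥ η/(2*L) * S - 2 * η * E * Δ := by
    rw [htel]
    calc ∑ τ ∈ Finset.range E, (‖w τ - wstar‖ ^ 2 - ‖w (τ+1) - wstar‖ ^ 2)
        ≥ ∑ τ ∈ Finset.range E, (η / (2*L) * ‖g τ‖ ^ 2 - 2 * η * Δ) :=
          Finset.sum_le_sum (fun τ _ => hstep τ)
      _ = η/(2*L) * S - 2 * η * E * Δ := by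
          rw [Finset.sum_sub_distrib, ← Finset.mul_sum, Finset.sum_const, Finset.card_range]
          push_cast; ring
  -- Cauchy-Schwarz
  have hCS : ‖u‖ ^ 2 ≤ (E : ℝ) * S := by
    have h1 : ‖u‖ ≤ ∑ τ ∈ Finset.range E, ‖g τ‖ := by
      rw [hu]; exact norm_sum_le _ _
    have h2 : ‖u‖^2 ≤ (∑ τ ∈ Finset.range E, ‖g τ‖)^2 := by
      apply pow_le_pow_left₀ (norm_nonneg _) h1
    have h3 : (∑ τ ∈ Finset.range E, ‖g τ‖)^2 ≤ (E : ℝ) * S := by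
      have := sq_sum_le_card_mul_sum_sq (s := Finset.range E) (f := fun τ => ‖g τ‖)
      simpa [hS] using this
    linarith
  have hEpos : (0:ℝ) < (E:ℝ) := Nat.cast_pos.mpr hE
  have hfinal : η / (2 * L * E) * ‖u‖ ^ 2 ≤ η/(2*L) * S := by
    calc η / (2 * L * E) * ‖u‖ ^ 2 ≤ η / (2 * L * E) * ((E:ℝ) * S) := by
          apply mul_le_mul_of_nonneg_left hCS (by positivity)
      _ = η/(2*L) * S := by field_simp
  linarith
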